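/- If f = (A,B,C) is in G⁺ and γ(f) = (q₁,…,q_l), then Gauss's reduction operator applied to f equals f(q₁x+y, −x); that is, the number δ in the definition of R_G(f) equals the first partial quotient q₁ of γ(f). -/

import Mathlib

/-- A binary quadratic form `A x² + B x y + C y²` with integer coefficients. -/
structure QF where
  a : ℤ
  b : ℤ
  c : ℤ

/-- The discriminant `B² - 4AC` of a form. -/
def QF.disc (f : QF) : ℤ := f.b ^ 2 - 4 * f.a * f.c

/-- The action of a matrix `[[α, β], [γ, δ]]` on a form:
`f(x,y) ↦ f(αx + βy, γx + δy)`. -/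
def QF.transform (f : QF) (α β γ δ : ℤ) : QF :=
  ⟨f.a * α ^ 2 + f.b * α * γ + f.c * γ ^ 2,
   2 * f.a * α * β + f.b * (α * δ + β * γ) + 2 * f.c * γ * δ,
   f.a * β ^ 2 + f.b * β * δ + f.c * δ ^ 2⟩

/-- A form is indefinite if its discriminant is positive and not a perfect square. -/
def QF.IsIndefinite (f : QF) : Prop := 0 < f.disc ∧ ¬ IsSquare f.disc

/-- An indefinite form `(A,B,C)` is Z-reduced if `A,B,C > 0` and `B > A + C`. -/
def QF.IsZReduced (f : QF) : Prop :=
  f.IsIndefinite ∧ 0 < f.a ∧ 0 < f.b ∧ 0 < f.c ∧ f.a + f.c < f.b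

/-- An indefinite form `(A,B,C)` is G-reduced if `AC < 0` and `B > |A + C|`. -/
def QF.IsGReduced (f : QF) : Prop :=
  f.IsIndefinite ∧ f.a * f.c < 0 ∧ |f.a + f.c| < f.b

/-- G-reduced with `A > 0`. -/
def QF.IsGPlus (f : QF) : Prop := f.IsGReduced ∧ 0 < f.a

/-- G-reduced with `A < 0`. -/
def QF.IsGMinus (f : QF) : Prop := f.IsGReduced ∧ f.a < 0

/-- `(t, u)` is the fundamental solution of `|t² - Δ u²| = 4`:
a solution in positive integers with `u` minimal. -/
def IsFundSol (Δ t u : ℤ) : Prop :=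
  0 < t ∧ 0 < u ∧ |t ^ 2 - Δ * u ^ 2| = 4 ∧
    ∀ t' u' : ℤ, 0 < t' → 0 < u' → |t' ^ 2 - Δ * u' ^ 2| = 4 → u ≤ u'

/-- The continuant of a finite sequence of integers. -/
def cont : List ℤ → ℤ
  | [] => 1
  | [q] => q
  | q :: r :: t => q * cont (r :: t) + cont t

/-- `L` is the list of partial quotients of a regular continued fraction expansion of
the rational number `x`: all partial quotients are positive and the value of the
continued fraction, namely `cont L / cont L.tail`, equals `x`. -/
def IsCF (x : ℚ) (L : List ℤ) : Prop :=
  L ≠ [] ∧ (∀ q ∈ L, 0 < q) ∧ (cont L : ℚ) = x * cont L.tail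

/-- The bead sequence `β(f)` of a Z-reduced form `f = (A,B,C)` of discriminant `Δ`:
with `(t,u)` the fundamental solution of `|t² - Δu²| = 4` and `z = (t + Bu)/2`,
it is the continued fraction expansion of `z/(z - Au)` whose number of partial
quotients is even if `t² - Δu² = -4` and odd otherwise. -/
def QF.IsBeta (f : QF) (L : List ℤ) : Prop :=
  ∃ t u : ℤ, IsFundSol f.disc t u ∧
    IsCF ((((t + f.b * u : ℤ) : ℚ) / 2) / ((((t + f.b * u : ℤ) : ℚ) / 2) - ((f.a * u : ℤ) : ℚ))) L ∧
    (t ^ 2 - f.disc * u ^ 2 = -4 → Even L.length) ∧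
    (t ^ 2 - f.disc * u ^ 2 = 4 → Odd L.length)

/-- Dirichlet's map `γ(f)` for `f = (A,B,C)` in `G⁺` of discriminant `Δ`:
with `(t,u)` the fundamental solution of `|t² - Δu²| = 4` and `z = (t + Bu)/2`,
it is the continued fraction expansion of `z/(Au)` whose number of partial
quotients is odd if `t² - Δu² = -4` and even otherwise. -/
def QF.IsGamma (f : QF) (L : List ℤ) : Prop :=
  ∃ t u : ℤ, IsFundSol f.disc t u ∧
    IsCF ((((t + f.b * u : ℤ) : ℚ) / 2) / ((f.a * u : ℤ) : ℚ)) L ∧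
    (t ^ 2 - f.disc * u ^ 2 = -4 → Odd L.length) ∧
    (t ^ 2 - f.disc * u ^ 2 = 4 → Even L.length)

/-- The stars-and-bars map: `(q₁, …, q_l)` is sent to the binary string of length
`q₁ + ⋯ + q_l - 1` whose `j`-th character is `1` exactly at the partial sums
`q₁, q₁ + q₂, …, q₁ + ⋯ + q_{l-1}`. -/
def sb : List ℤ → List Bool
  | [] => []
  | [q] => List.replicate (q - 1).toNat false
  | q :: r :: t => List.replicate (q - 1).toNat false ++ true :: sb (r :: t)

/-- `σ(f) = sb(β(f))`. -/
def QF.IsSigma (f : QF) (s : List Bool) : Prop :=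
  ∃ L : List ℤ, f.IsBeta L ∧ s = sb L

/-- Zagier's reduction operator: `f ↦ f(nx + y, -x)` with `n = ⌈(B + √Δ)/(2A)⌉`. -/
noncomputable def RZ (f : QF) : QF :=
  f.transform ⌈((f.b : ℝ) + Real.sqrt (f.disc : ℝ)) / (2 * (f.a : ℝ))⌉ 1 (-1) 0

/-- The number `δ` in Gauss's reduction operator: `|δ| = ⌊(B + √Δ)/(2|A|)⌋` with
`δ` having the sign of `A`. -/
noncomputable def gaussDelta (f : QF) : ℤ :=
  f.a.sign * ⌊((f.b : ℝ) + Real.sqrt (f.disc : ℝ)) / (2 * |(f.a : ℝ)|)⌋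

/-- Gauss's reduction operator: `f ↦ f(δx + y, -x)`. -/
noncomputable def RG (f : QF) : QF := f.transform (gaussDelta f) 1 (-1) 0

/-- Add `1` to the last entry of a list. -/
def addLast : List ℤ → List ℤ
  | [] => []
  | [q] => [q + 1]
  | q :: r :: t => q :: addLast (r :: t)

/-- Subtract `1` from the last entry of a list. -/
def subLast : List ℤ → List ℤ
  | [] => []
  | [q] => [q - 1]
  | q :: r :: t => q :: subLast (r :: t)

/-- Subtract `1` from the first entry of a list. -/
def decHead : List ℤ → List ℤ
  | [] => []
  | q :: t => (q - 1) :: t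

/-- The operator `T_Z`: `(q₁,…,q_l) ↦ (q₁-1, q₂, …, q_{l-1}, q_l+1)` if `q₁ ≥ 2`;
`(q₂, q₁)` if `q₁ = 1` and `l = 2`; `(q₃, …, q_l, q₂, q₁)` if `q₁ = 1` and `l > 2`. -/
def TZ : List ℤ → List ℤ
  | [] => []
  | [q] => [q]
  | q :: r :: s => if q = 1 then s ++ [r, 1] else (q - 1) :: addLast (r :: s)

/-- The map `μ` from G-reduced forms to Z-reduced forms. -/
def mu (f : QF) : QF :=
  if 0 < f.a then ⟨f.a, 2 * f.a + f.b, f.a + f.b + f.c⟩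
  else ⟨f.a + f.b + f.c, f.b + 2 * f.c, f.c⟩

/-- The section `τ` of `β`: `τ((q₁,…,q_l)) = (A,B,C)` with `A = [q₁-1, q₂, …, q_l]`,
`C = [q₁, …, q_{l-1}, q_l - 1]`, `B = [q₁,…,q_l] + [q₁-1, q₂, …, q_{l-1}, q_l-1]`. -/
def tau (L : List ℤ) : QF :=
  ⟨cont (decHead L), cont L + cont (subLast (decHead L)), cont (subLast L)⟩

/-- Multiply all coefficients of a form by `u`. -/
def QF.smul (u : ℤ) (f : QF) : QF := ⟨u * f.a, u * f.b, u * f.c⟩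

/-- The reversal `(A,B,C)^R = (C,B,A)`. -/
def QF.rev (f : QF) : QF := ⟨f.c, f.b, f.a⟩

/-- The map `ρ((A,B,C)) = (-A, B, -C)`. -/
def rho (f : QF) : QF := ⟨-f.a, f.b, -f.c⟩

/-- A form is primitive if its coefficients have gcd 1. -/
def IsPrimitiveForm (f : QF) : Prop := Int.gcd f.a (Int.gcd f.b f.c) = 1

/-- `SL₂(ℤ)`-equivalence of forms. -/
def FormEquiv (f g : QF) : Prop :=
  ∃ α β γ δ : ℤ, α * δ - β * γ = 1 ∧ g = f.transform α β γ δ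

/-- A nonempty string is primitive if it differs from all of its nontrivial cyclic
shifts. -/
def PrimitiveList {α : Type*} (l : List α) : Prop :=
  l ≠ [] ∧ ∀ n, 0 < n → n < l.length → l.rotate n ≠ l

/-- The continuant `[q₂, …, q_{l-1}]` of the interior of a list, with the convention
that it is `0` for a list of length `≤ 1`. -/
def innerCont (L : List ℤ) : ℤ := if L.length ≤ 1 then 0 else cont (L.tail.dropLast)

/-- The section `ξ` of `γ`: `ξ((q₁,…,q_l)) = (A,B,C)` with `A = [q₂,…,q_l]`,
`B = [q₁,…,q_l] - [q₂,…,q_{l-1}]`, `C = -[q₁,…,q_{l-1}]`. -/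
def xiForm (L : List ℤ) : QF := ⟨cont L.tail, cont L - innerCont L, -(cont L.dropLast)⟩

/-- `p` is the minimal period of the purely periodic sequence `d`. -/
def IsMinPeriod {α : Type*} [Inhabited α] (d : ℕ → α) (p : List α) : Prop :=
  p ≠ [] ∧ (∀ n, d n = p.getD (n % p.length) default) ∧
    ∀ m, 0 < m → (∀ n, d (n + m) = d n) → p.length ≤ m

/-- `d` is the sequence of partial quotients of the Denjoy continued fraction of `x`
(`true` = quotient 1, `false` = quotient 0): `ξ₀ = x`, `qₙ = 0` if `ξ_{n-1} < 1`,
`qₙ = 1` if `ξ_{n-1} > 1`, and `ξₙ = 1/(ξ_{n-1} - qₙ)`. -/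
def IsDenjoySeq (x : ℝ) (d : ℕ → Bool) : Prop :=
  ∃ ξ : ℕ → ℝ, ξ 0 = x ∧
    ∀ n, ((ξ n < 1 ∧ d n = false) ∨ (1 < ξ n ∧ d n = true)) ∧
      ξ (n + 1) = 1 / (ξ n - if d n then 1 else 0)

/-- `a` is the sequence of partial quotients of the regular continued fraction of `x`. -/
def IsRegCFSeq (x : ℝ) (a : ℕ → ℤ) : Prop :=
  ∃ ξ : ℕ → ℝ, ξ 0 = x ∧ ∀ n, a n = ⌊ξ n⌋ ∧ ξ (n + 1) = 1 / (ξ n - (a n : ℝ))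

/-- Regular-to-Denjoy conversion: each partial quotient `q` becomes the string
`1 0 1 0 ⋯ 0 1` of `q` ones alternating with `q - 1` zeroes. -/
def regToDen (L : List ℤ) : List Bool :=
  (L.map fun q => true :: (List.replicate (q - 1).toNat [false, true]).flatten).flatten

/-- Replace each character `0` by the two characters `01`. -/
def expand01 (s : List Bool) : List Bool :=
  (s.map fun b => if b then [true] else [false, true]).flatten

/-- A quadratic irrational. -/
def IsQuadIrrational (x : ℝ) : Prop :=
  Irrational x ∧ ∃ a b c : ℤ, a ≠ 0 ∧ (a : ℝ) * x ^ 2 + (b : ℝ) * x + (c : ℝ) = 0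

section ContLemmas

theorem cont_pos : ∀ (L : List ℤ), (∀ q ∈ L, 0 < q) → 0 < cont L
  | [], _ => one_pos
  | [q], h => by simpa [cont] using h q (by simp)
  | q :: r :: t, h => by
    have h1 := cont_pos (r :: t) fun x hx => h x (List.mem_cons_of_mem _ hx)
    have h2 := cont_pos t fun x hx => h x (List.mem_cons_of_mem _ (List.mem_cons_of_mem _ hx))
    have hq := h q (by simp)
    simp only [cont]
    nlinarith

theorem cont_tail_le : ∀ (L : List ℤ), (∀ q ∈ L, 0 < q) → cont L.tail ≤ cont L
  | [], _ => le_refl _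
  | [q], h => by have := h q (by simp); simp [cont]; omega
  | q :: r :: t, h => by
    have h1 := cont_pos (r :: t) fun x hx => h x (List.mem_cons_of_mem _ hx)
    have h2 := cont_pos t fun x hx => h x (List.mem_cons_of_mem _ (List.mem_cons_of_mem _ hx))
    have hq := h q (by simp)
    simp only [cont, List.tail_cons]
    nlinarith

theorem cont_headI_le : ∀ (L : List ℤ), (∀ q ∈ L, 0 < q) → L.headI * cont L.tail ≤ cont L
  | [], _ => by simp [cont]
  | [q], h => by simp [cont]
  | q :: r :: t, h => by
    have h2 := cont_pos t fun x hx => h x (List.mem_cons_of_mem _ (List.mem_cons_of_mem _ hx))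
    simp only [cont, List.tail_cons, List.headI]
    nlinarith

theorem cont_odd_gap : ∀ (L : List ℤ), (∀ q ∈ L, 0 < q) → Odd L.length →
    cont L + 1 ≤ (L.headI + 1) * cont L.tail
  | [], _, hodd => by simp at hodd
  | [q], _, _ => by simp [cont]
  | q :: r :: t, h, hodd => by
    have ht : t ≠ [] := by
      intro h'; subst h'; simp [Nat.odd_iff] at hodd
    obtain ⟨s', v, rfl⟩ : ∃ s' v, t = s' :: v := by
      cases t with
      | nil => exact absurd rfl ht
      | cons a b => exact ⟨a, b, rfl⟩
    have h1 := cont_pos (s' :: v) fun x hx => h x (by simp [List.mem_cons] at hx ⊢; tauto)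
    have h2 := cont_pos v fun x hx => h x (by simp [List.mem_cons] at hx ⊢; tauto)
    have hr : 0 < r := h r (by simp)
    have hq : 0 < q := h q (by simp)
    simp only [cont, List.tail_cons, List.headI]
    nlinarith

theorem cont_coprime : ∀ (L : List ℤ), IsCoprime (cont L) (cont L.tail)
  | [] => by simpa [cont] using (isCoprime_one_left : IsCoprime (1:ℤ) 1)
  | [q] => by simpa [cont] using (isCoprime_one_right : IsCoprime q 1)
  | q :: r :: t => by
    have ih := cont_coprime (r :: t)
    have h : cont (q :: r :: t) = cont t + cont (r :: t) * q := by simp only [cont]; ring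
    rw [List.tail_cons, h]
    exact ih.symm.add_mul_left_left q

theorem floor_aux (a u b s : ℝ) (q N : ℤ) (ha : 0 < a) (hu : 0 < u)
    (hN : (N : ℝ) = a * u)
    (h1 : (q : ℝ) * (N : ℝ) < u * (b + s) / 2)
    (h2 : u * (b + s) / 2 < ((q : ℝ) + 1) * (N : ℝ)) :
    ⌊(b + s) / (2 * a)⌋ = q := by
  rw [hN] at h1 h2
  rw [Int.floor_eq_iff]
  refine ⟨?_, ?_⟩
  · rw [le_div_iff₀ (by positivity)]
    nlinarith
  · rw [div_lt_iff₀ (by positivity)]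
    nlinarith

end ContLemmas


set_option maxHeartbeats 1000000 in
/-- **Lemma (first coefficient).** If `f ∈ G⁺` and `γ(f) = (q₁,…,q_l)`, then the
number `δ` in the definition of `R_G` equals `q₁`, so
`R_G(f) = f(q₁ x + y, -x)`. -/
theorem stmt14 (f : QF) (hf : f.IsGPlus) (L : List ℤ) (hL : f.IsGamma L) :
    gaussDelta f = L.headI ∧ RG f = f.transform L.headI 1 (-1) 0 := by
  obtain ⟨⟨⟨hΔpos, -⟩, hAC, hBabs⟩, hA⟩ := hf
  obtain ⟨t, u, hfund, hcf, hoddP, hevenP⟩ := hL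
  obtain ⟨ht, hu, habs, -⟩ := hfund
  obtain ⟨hne, hpos, hval⟩ := hcf
  have hB : 0 < f.b := lt_of_le_of_lt (abs_nonneg _) hBabs
  have hC : f.c < 0 := by nlinarith
  have hdisc : f.disc = f.b ^ 2 - 4 * f.a * f.c := rfl
  have he : t ^ 2 - f.disc * u ^ 2 = 4 ∨ t ^ 2 - f.disc * u ^ 2 = -4 := by
    rcases (abs_eq (by norm_num : (0:ℤ) ≤ 4)).mp habs with h | h
    · exact Or.inl h
    · exact Or.inr h
  -- z is an integer
  obtain ⟨z, hz⟩ : ∃ z : ℤ, 2 * z = t + f.b * u := by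
    rcases Int.even_or_odd (t + f.b * u) with hE | hO
    · obtain ⟨k, hk⟩ := hE; exact ⟨k, by linarith⟩
    · exfalso
      have hO2 : Odd (t - f.b * u) := by
        obtain ⟨k, hk⟩ := hO; exact ⟨k - f.b * u, by linarith⟩
      have hOprod := hO.mul hO2
      have hprod : (t + f.b * u) * (t - f.b * u)
          = (t ^ 2 - f.disc * u ^ 2) - 4 * (f.a * f.c * u ^ 2) := by
        rw [hdisc]; ring
      rw [hprod] at hOprod
      obtain ⟨k, hk⟩ := hOprod
      obtain ⟨m, hm⟩ : ∃ m, f.a * f.c * u ^ 2 = m := ⟨_, rfl⟩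
      rw [hm] at hk
      rcases he with h | h <;> rw [h] at hk <;> omega
  have h4z : 4 * (z ^ 2 - f.b * z * u + f.a * f.c * u ^ 2) = t ^ 2 - f.disc * u ^ 2 := by
    rw [hdisc]; linear_combination (2 * z - f.b * u + t) * hz
  -- from the CF value equation
  have hcontL : 0 < cont L := cont_pos L hpos
  have hcontT : 0 < cont L.tail := cont_pos L.tail fun x hx => hpos x (List.mem_of_mem_tail hx)
  have hAuQ : ((f.a * u : ℤ) : ℚ) ≠ 0 := by
    exact_mod_cast (mul_pos hA hu).ne'
  have hintQ : (cont L : ℚ) * ((f.a * u : ℤ) : ℚ) * 2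
      = ((t + f.b * u : ℤ) : ℚ) * (cont L.tail : ℚ) := by
    rw [hval]; field_simp
  have hint : cont L * (f.a * u) * 2 = (t + f.b * u) * cont L.tail := by
    exact_mod_cast hintQ
  have hvalZ : cont L * (f.a * u) = z * cont L.tail := by
    have h2 : cont L * (f.a * u) * 2 = z * cont L.tail * 2 := by
      linear_combination hint - cont L.tail * hz
    exact mul_right_cancel₀ two_ne_zero h2
  have hz0 : 0 < z := by
    have hbu : 0 < f.b * u := mul_pos hB hu
    linarith
  -- the quadratic equation satisfied by z, with e = ±1
  obtain ⟨e, he1, hq, hparE, hparO⟩ :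
      ∃ e : ℤ, (e = 1 ∨ e = -1) ∧ z ^ 2 - f.b * z * u + f.a * f.c * u ^ 2 = e ∧
        (e = 1 → Even L.length) ∧ (e = -1 → Odd L.length) := by
    rcases he with h | h
    · exact ⟨1, Or.inl rfl, by linarith, fun _ => hevenP h, fun h1 => by norm_num at h1⟩
    · exact ⟨-1, Or.inr rfl, by linarith, fun h1 => by norm_num at h1, fun _ => hoddP h⟩
  have hcopz : IsCoprime z (f.a * u) := by
    rcases he1 with h | h <;> subst h
    · exact ⟨z - f.b * u, f.c * u, by linear_combination hq⟩
    · exact ⟨-(z - f.b * u), -(f.c * u), by linear_combination -hq⟩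
  have hdv1 : z ∣ cont L := hcopz.dvd_of_dvd_mul_right ⟨cont L.tail, hvalZ⟩
  have hdv2 : cont L ∣ z := (cont_coprime L).dvd_of_dvd_mul_right ⟨f.a * u, hvalZ.symm⟩
  have hzL : z = cont L := Int.dvd_antisymm hz0.le hcontL.le hdv1 hdv2
  have hAuT : f.a * u = cont L.tail := by
    have h2 := hvalZ
    rw [hzL] at h2
    exact mul_left_cancel₀ hcontL.ne' h2
  rw [hzL] at hq
  -- real number setup
  have hΔ0 : (0 : ℝ) < ((f.disc : ℤ) : ℝ) := by exact_mod_cast hΔpos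
  have hs2 : (Real.sqrt ((f.disc : ℤ) : ℝ)) ^ 2 = ((f.disc : ℤ) : ℝ) := Real.sq_sqrt hΔ0.le
  have hs0 : 0 < Real.sqrt ((f.disc : ℤ) : ℝ) := Real.sqrt_pos.mpr hΔ0
  have ha0 : (0 : ℝ) < (f.a : ℝ) := by exact_mod_cast hA
  have hu0 : (0 : ℝ) < (u : ℝ) := by exact_mod_cast hu
  have hBd : f.b ^ 2 < f.disc := by rw [hdisc]; nlinarith [hAC]
  have hBs : (f.b : ℝ) < Real.sqrt ((f.disc : ℤ) : ℝ) := by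
    have h1 : ((f.b : ℝ)) ^ 2 < ((f.disc : ℤ) : ℝ) := by exact_mod_cast hBd
    have h2 : (0 : ℝ) ≤ (f.b : ℝ) := by exact_mod_cast hB.le
    nlinarith
  have keyR : (((cont L : ℤ) : ℝ) - (u : ℝ) * ((f.b : ℝ) + Real.sqrt ((f.disc : ℤ) : ℝ)) / 2)
      * (((cont L : ℤ) : ℝ) - (u : ℝ) * ((f.b : ℝ) - Real.sqrt ((f.disc : ℤ) : ℝ)) / 2)
      = ((e : ℤ) : ℝ) := by
    have hqR : ((cont L : ℤ) : ℝ) ^ 2 - (f.b : ℝ) * ((cont L : ℤ) : ℝ) * (u : ℝ)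
        + (f.a : ℝ) * (f.c : ℝ) * (u : ℝ) ^ 2 = ((e : ℤ) : ℝ) := by exact_mod_cast hq
    have hdR : ((f.disc : ℤ) : ℝ) = (f.b : ℝ) ^ 2 - 4 * (f.a : ℝ) * (f.c : ℝ) := by
      rw [hdisc]; push_cast; ring
    linear_combination hqR - ((u : ℝ) ^ 2 / 4) * hs2 - ((u : ℝ) ^ 2 / 4) * hdR
  have hNZr : ((cont L.tail : ℤ) : ℝ) ≤ ((cont L : ℤ) : ℝ) := by
    exact_mod_cast cont_tail_le L hpos
  have hN1r : (1 : ℝ) ≤ ((cont L.tail : ℤ) : ℝ) := by exact_mod_cast hcontT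
  have hw'neg : (u : ℝ) * ((f.b : ℝ) - Real.sqrt ((f.disc : ℤ) : ℝ)) / 2 < 0 := by
    nlinarith [mul_pos hu0 (sub_pos.mpr hBs)]
  have hzw' : ((cont L.tail : ℤ) : ℝ)
      < ((cont L : ℤ) : ℝ) - (u : ℝ) * ((f.b : ℝ) - Real.sqrt ((f.disc : ℤ) : ℝ)) / 2 := by
    linarith
  have final : ∀ q : ℤ,
      (q : ℝ) * ((cont L.tail : ℤ) : ℝ)
        < (u : ℝ) * ((f.b : ℝ) + Real.sqrt ((f.disc : ℤ) : ℝ)) / 2 →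
      (u : ℝ) * ((f.b : ℝ) + Real.sqrt ((f.disc : ℤ) : ℝ)) / 2
        < ((q : ℝ) + 1) * ((cont L.tail : ℤ) : ℝ) →
      gaussDelta f = q ∧ RG f = f.transform q 1 (-1) 0 := by
    intro q hlo hhi
    have hNau : ((cont L.tail : ℤ) : ℝ) = (f.a : ℝ) * (u : ℝ) := by
      rw [← hAuT]; push_cast; ring
    have hfl := floor_aux (f.a : ℝ) (u : ℝ) (f.b : ℝ) (Real.sqrt ((f.disc : ℤ) : ℝ))
      q (cont L.tail) ha0 hu0 hNau hlo hhi
    have hgd : gaussDelta f = q := by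
      unfold gaussDelta
      rw [Int.sign_eq_one_iff_pos.mpr hA, one_mul, abs_of_pos ha0, hfl]
    refine ⟨hgd, ?_⟩
    have hRG : RG f = f.transform (gaussDelta f) 1 (-1) 0 := rfl
    rw [hRG, hgd]
  rcases he1 with h | h <;> subst h
  · -- e = 1 : even length
    have hEv := hparE rfl
    norm_num at keyR
    rcases L with - | ⟨q, L'⟩
    · exact absurd rfl hne
    rcases L' with - | ⟨r, t'⟩
    · simp [Nat.even_iff] at hEv
    simp only [List.tail_cons] at keyR hNZr hN1r hzw' final
    have hq1 : (1 : ℤ) ≤ q := hpos q (by simp)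
    have hcv : 0 < cont t' := cont_pos t' fun x hx => hpos x (by simp [hx])
    have hMN : cont t' ≤ cont (r :: t') := by
      have := cont_tail_le (r :: t') fun x hx => hpos x (List.mem_cons_of_mem _ hx)
      simpa using this
    have hsum : cont (q :: r :: t') = q * cont (r :: t') + cont t' := rfl
    have hsumR : ((cont (q :: r :: t') : ℤ) : ℝ)
        = (q : ℝ) * ((cont (r :: t') : ℤ) : ℝ) + ((cont t' : ℤ) : ℝ) := by
      exact_mod_cast hsum
    have hcvR : (1 : ℝ) ≤ ((cont t' : ℤ) : ℝ) := by exact_mod_cast hcv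
    have hMNr : ((cont t' : ℤ) : ℝ) ≤ ((cont (r :: t') : ℤ) : ℝ) := by exact_mod_cast hMN
    have hZw' : (0 : ℝ) < ((cont (q :: r :: t') : ℤ) : ℝ)
        - (u : ℝ) * ((f.b : ℝ) - Real.sqrt ((f.disc : ℤ) : ℝ)) / 2 := by linarith
    have h1 : 0 < ((cont (q :: r :: t') : ℤ) : ℝ)
        - (u : ℝ) * ((f.b : ℝ) + Real.sqrt ((f.disc : ℤ) : ℝ)) / 2 := by
      by_contra hcon
      push_neg at hcon
      have hp := mul_nonneg (by linarith : (0 : ℝ) ≤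
        (u : ℝ) * ((f.b : ℝ) + Real.sqrt ((f.disc : ℤ) : ℝ)) / 2
          - ((cont (q :: r :: t') : ℤ) : ℝ)) hZw'.le
      linarith [hp, keyR]
    have hm := mul_lt_mul_of_pos_left hzw' h1
    have hnn := mul_nonneg h1.le (by linarith : (0 : ℝ) ≤ ((cont (r :: t') : ℤ) : ℝ) - 1)
    have h3 : ((cont (q :: r :: t') : ℤ) : ℝ)
        - (u : ℝ) * ((f.b : ℝ) + Real.sqrt ((f.disc : ℤ) : ℝ)) / 2 < 1 := by
      linarith [hm, keyR, hnn]
    exact final q (by linarith) (by linarith)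
  · -- e = -1 : odd length
    have hOd := hparO rfl
    norm_num at keyR
    have hZw' : (0 : ℝ) < ((cont L : ℤ) : ℝ)
        - (u : ℝ) * ((f.b : ℝ) - Real.sqrt ((f.disc : ℤ) : ℝ)) / 2 := by linarith
    have h1 : 0 < (u : ℝ) * ((f.b : ℝ) + Real.sqrt ((f.disc : ℤ) : ℝ)) / 2
        - ((cont L : ℤ) : ℝ) := by
      by_contra hcon
      push_neg at hcon
      have hp := mul_nonneg (by linarith : (0 : ℝ) ≤ ((cont L : ℤ) : ℝ)
          - (u : ℝ) * ((f.b : ℝ) + Real.sqrt ((f.disc : ℤ) : ℝ)) / 2) hZw'.le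
      linarith [hp, keyR]
    have hm := mul_lt_mul_of_pos_left hzw' h1
    have hnn := mul_nonneg h1.le (by linarith : (0 : ℝ) ≤ ((cont L.tail : ℤ) : ℝ) - 1)
    have key2 : ((u : ℝ) * ((f.b : ℝ) + Real.sqrt ((f.disc : ℤ) : ℝ)) / 2
          - ((cont L : ℤ) : ℝ))
        * (((cont L : ℤ) : ℝ) - (u : ℝ) * ((f.b : ℝ) - Real.sqrt ((f.disc : ℤ) : ℝ)) / 2)
        = 1 := by linear_combination -keyR
    have h3 : (u : ℝ) * ((f.b : ℝ) + Real.sqrt ((f.disc : ℤ) : ℝ)) / 2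
        - ((cont L : ℤ) : ℝ) < 1 := by
      linarith [hm, key2, hnn]
    have hlow : L.headI * cont L.tail ≤ cont L := cont_headI_le L hpos
    have hlowR : ((L.headI : ℤ) : ℝ) * ((cont L.tail : ℤ) : ℝ) ≤ ((cont L : ℤ) : ℝ) := by
      exact_mod_cast hlow
    have hgap : cont L + 1 ≤ (L.headI + 1) * cont L.tail := cont_odd_gap L hpos hOd
    have hgapR : ((cont L : ℤ) : ℝ) + 1
        ≤ (((L.headI : ℤ) : ℝ) + 1) * ((cont L.tail : ℤ) : ℝ) := by
      exact_mod_cast hgap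
    exact final L.headI (by linarith) (by linarith)
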